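/- Let (f, τ, c) be degree −2 branched covering data with critical value v = f(c), and assume f is oriented. Let X ⊆ ℂ be an unshielded continuum with f(X) = X which is not fully invariant (f⁻¹(X) ≠ X), and suppose v ∈ T(X). Then: (i) T(X) is not fully invariant, i.e. f⁻¹(T(X)) ≠ T(X); (ii) τ(X) is not contained in T(X); and (iii) X ∩ τ(X) ≠ ∅. -/

import Mathlib

open Set Topology Bornology

/-- A continuum: a nonempty compact connected subset of ℂ. -/
def IsContinuum (K : Set ℂ) : Prop := IsCompact K ∧ IsConnected K

/-- The topological hull `T(Y)`: the complement of the unbounded connected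
component of `ℂ \ Y`. -/
def hullC (Y : Set ℂ) : Set ℂ := {z | IsBounded (connectedComponentIn Yᶜ z)}

/-- `X` is unshielded: it equals the boundary of the unbounded component
`U_∞(X) = (T(X))ᶜ` of its complement. -/
def Unshielded (X : Set ℂ) : Prop := X = frontier (hullC X)ᶜ

lemma subset_hullC (Y : Set ℂ) : Y ⊆ hullC Y := by
  intro y hy
  have : connectedComponentIn Yᶜ y = ∅ := connectedComponentIn_eq_empty (by simp [hy])
  simp [hullC, this]

lemma hullC_mono {A B : Set ℂ} (h : A ⊆ B) : hullC A ⊆ hullC B := by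
  intro z hz
  by_cases hzB : z ∈ B
  · exact subset_hullC B hzB
  · have hsub : connectedComponentIn Bᶜ z ⊆ connectedComponentIn Aᶜ z :=
      connectedComponentIn_mono z (compl_subset_compl.mpr h)
    exact IsBounded.subset (show IsBounded (connectedComponentIn Aᶜ z) from hz) hsub

lemma isClosed_hullC {Y : Set ℂ} (hY : IsClosed Y) : IsClosed (hullC Y) := by
  rw [← isOpen_compl_iff, isOpen_iff_mem_nhds]
  intro z hz
  have hzY : z ∈ Yᶜ := by
    by_contra h
    exact hz (subset_hullC Y (by simpa using h))
  have hN : connectedComponentIn Yᶜ z ∈ 𝓝 z :=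
    connectedComponentIn_mem_nhds (hY.isOpen_compl.mem_nhds hzY)
  filter_upwards [hN] with w hw
  intro hwhull
  have : connectedComponentIn Yᶜ z = connectedComponentIn Yᶜ w := connectedComponentIn_eq hw
  exact hz (by simpa [hullC, this] using hwhull)

lemma isConnected_norm_gt (r : ℝ) (hr : 0 ≤ r) : IsConnected {z : ℂ | r < ‖z‖} := by
  have himg : (fun p : ℝ × ℂ => p.1 • p.2) '' (Ioi r ×ˢ Metric.sphere (0:ℂ) 1)
      = {z : ℂ | r < ‖z‖} := by
    ext z
    constructor
    · rintro ⟨⟨s, v⟩, ⟨hs, hv⟩, rfl⟩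
      have hv1 : ‖v‖ = 1 := by simpa using hv
      have hs' : (0:ℝ) < s := lt_of_le_of_lt hr hs
      simp only [mem_setOf_eq, norm_smul, hv1, mul_one, Real.norm_eq_abs,
        abs_of_pos hs']
      exact hs
    · intro hz
      have hz0 : z ≠ 0 := by
        intro h; rw [h] at hz; simp at hz; linarith
      refine ⟨(‖z‖, ‖z‖⁻¹ • z), ⟨hz, ?_⟩, ?_⟩
      · simp only [Metric.mem_sphere, dist_zero_right, norm_smul, norm_inv, norm_norm]
        rw [inv_mul_cancel₀ (norm_ne_zero_iff.mpr hz0)]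
      · simp only [smul_smul]
        rw [mul_inv_cancel₀ (norm_ne_zero_iff.mpr hz0), one_smul]
  rw [← himg]
  refine IsConnected.image ?_ _ (continuous_fst.smul continuous_snd).continuousOn
  exact (isConnected_Ioi).prod
    (isConnected_sphere (by rw [Complex.rank_real_complex]; norm_num) 0 zero_le_one)

lemma unbounded_norm_gt (r : ℝ) : ¬ IsBounded {z : ℂ | r < ‖z‖} := by
  intro h
  obtain ⟨C, hC⟩ := (isBounded_iff_forall_norm_le).mp h
  set M : ℝ := max r C + 1 with hM
  have hMpos : max r C < M := by simp [hM]
  have hmem : ((M:ℝ) : ℂ) ∈ {z : ℂ | r < ‖z‖} := by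
    have hnorm : ‖((M:ℝ) : ℂ)‖ = |M| := by
      rw [Complex.norm_real, Real.norm_eq_abs]
    simp only [mem_setOf_eq, hnorm]
    calc r ≤ max r C := le_max_left _ _
    _ < M := hMpos
    _ ≤ |M| := le_abs_self M
  have := hC _ hmem
  have h2 : ‖((M:ℝ) : ℂ)‖ = |M| := by rw [Complex.norm_real, Real.norm_eq_abs]
  rw [h2] at this
  have : M ≤ C := le_trans (le_abs_self M) this
  have : C < M := lt_of_le_of_lt (le_max_right r C) hMpos
  linarith

lemma notMem_hullC_of_norm {Y : Set ℂ} {r : ℝ} (hr : 0 ≤ r) (hY : ∀ y ∈ Y, ‖y‖ ≤ r)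
    {z : ℂ} (hz : r < ‖z‖) : z ∉ hullC Y := by
  intro hmem
  have hsub : {w : ℂ | r < ‖w‖} ⊆ Yᶜ := by
    intro w hw hwY
    exact absurd (hY w hwY) (not_le.mpr hw)
  have hconn := isConnected_norm_gt r hr
  have hzmem : z ∈ {w : ℂ | r < ‖w‖} := hz
  have : {w : ℂ | r < ‖w‖} ⊆ connectedComponentIn Yᶜ z :=
    hconn.isPreconnected.subset_connectedComponentIn hzmem hsub
  exact unbounded_norm_gt r (IsBounded.subset hmem this)

lemma isBounded_hullC {Y : Set ℂ} (hY : IsBounded Y) : IsBounded (hullC Y) := by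
  obtain ⟨C, hC⟩ := (isBounded_iff_forall_norm_le).mp hY
  set r : ℝ := max C 0 with hr
  have h0r : 0 ≤ r := le_max_right _ _
  apply (isBounded_iff_forall_norm_le).mpr ⟨r, ?_⟩
  intro x hx
  by_contra hlt
  exact notMem_hullC_of_norm h0r
    (fun y hy => le_trans (hC y hy) (le_max_left _ _)) (not_le.mp hlt) hx

lemma frontier_hullC_subset {Y : Set ℂ} (hY : IsClosed Y) : frontier (hullC Y) ⊆ Y := by
  intro z hz
  by_contra hzY
  have hzc : z ∈ Yᶜ := hzY
  have hN : connectedComponentIn Yᶜ z ∈ 𝓝 z :=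
    connectedComponentIn_mem_nhds (hY.isOpen_compl.mem_nhds hzc)
  by_cases hb : IsBounded (connectedComponentIn Yᶜ z)
  · have : connectedComponentIn Yᶜ z ⊆ hullC Y := by
      intro w hw
      have heq := connectedComponentIn_eq hw
      show IsBounded (connectedComponentIn Yᶜ w)
      rwa [← heq]
    have : z ∈ interior (hullC Y) := mem_interior_iff_mem_nhds.mpr
      (Filter.mem_of_superset hN this)
    exact hz.2 this
  · have : connectedComponentIn Yᶜ z ⊆ (hullC Y)ᶜ := by
      intro w hw hwh
      have heq := connectedComponentIn_eq hw
      exact hb (by rwa [heq])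
    have hzc2 : z ∈ interior (hullC Y)ᶜ := mem_interior_iff_mem_nhds.mpr
      (Filter.mem_of_superset hN this)
    rw [interior_compl] at hzc2
    exact hzc2 hz.1
lemma frontier_connectedComponentIn_subset {O : Set ℂ} (hO : IsOpen O) (x : ℂ) :
    frontier (connectedComponentIn O x) ⊆ Oᶜ := by
  intro w hw
  by_contra hwO
  rw [notMem_compl_iff] at hwO
  have hCopen : IsOpen (connectedComponentIn O x) := hO.connectedComponentIn
  have hwC : w ∉ connectedComponentIn O x := by
    intro h
    rw [← hCopen.interior_eq] at h
    exact hw.2 h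
  have hN : connectedComponentIn O w ∈ 𝓝 w :=
    connectedComponentIn_mem_nhds (hO.mem_nhds hwO)
  obtain ⟨y, hyN, hyC⟩ := mem_closure_iff_nhds.mp hw.1 _ hN
  have h1 : connectedComponentIn O w = connectedComponentIn O y := connectedComponentIn_eq hyN
  have h2 : connectedComponentIn O x = connectedComponentIn O y := connectedComponentIn_eq hyC
  exact hwC (h2 ▸ h1 ▸ mem_connectedComponentIn hwO)

lemma image_bounded_of_involutive {τ : ℂ → ℂ} (hτ : Continuous τ) {s : Set ℂ}
    (hs : IsBounded s) : IsBounded (τ '' s) := by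
  have h1 : τ '' s ⊆ τ '' (closure s) := image_mono (f := τ) subset_closure
  have h2 : IsCompact (τ '' (closure s)) :=
    (hs.isCompact_closure).image hτ
  exact h2.isBounded.subset h1

lemma image_connectedComponentIn_involutive {τ : ℂ → ℂ} (hτ : Continuous τ)
    (hττ : Function.Involutive τ) (S : Set ℂ) (z : ℂ) (hz : z ∈ S) :
    τ '' connectedComponentIn S z = connectedComponentIn (τ '' S) (τ z) := by
  apply Subset.antisymm
  · exact hτ.image_connectedComponentIn_subset hz
  · have hz' : τ z ∈ τ '' S := mem_image_of_mem τ hz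
    have h1 : τ '' connectedComponentIn (τ '' S) (τ z)
        ⊆ connectedComponentIn (τ '' (τ '' S)) (τ (τ z)) :=
      hτ.image_connectedComponentIn_subset hz'
    have h2 : τ '' (τ '' S) = S := by
      rw [← image_comp]
      simp only [hττ.comp_self]; exact image_id _
    rw [h2, hττ z] at h1
    intro w hw
    have : τ w ∈ τ '' connectedComponentIn (τ '' S) (τ z) := mem_image_of_mem τ hw
    have := h1 this
    have h3 := mem_image_of_mem τ this
    rwa [hττ w] at h3

lemma image_hullC {τ : ℂ → ℂ} (hτ : Continuous τ) (hττ : Function.Involutive τ)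
    (Y : Set ℂ) : hullC (τ '' Y) = τ '' hullC Y := by
  have hcompl : ∀ S : Set ℂ, (τ '' S)ᶜ = τ '' Sᶜ := by
    intro S
    rw [Set.image_compl_eq hττ.bijective]
  ext z
  have hzz : z = τ (τ z) := (hττ z).symm
  constructor
  · intro hz
    refine ⟨τ z, ?_, hττ z⟩
    show IsBounded (connectedComponentIn Yᶜ (τ z))
    by_cases hmem : τ z ∈ Yᶜ
    · have : IsBounded (connectedComponentIn (τ '' Y)ᶜ z) := hz
      rw [hcompl] at this
      have heq : τ '' connectedComponentIn Yᶜ (τ z) = connectedComponentIn (τ '' Yᶜ) (τ (τ z)) :=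
        image_connectedComponentIn_involutive hτ hττ Yᶜ (τ z) hmem
      rw [hττ z] at heq
      have hb : IsBounded (τ '' connectedComponentIn (τ '' Yᶜ) z) :=
        image_bounded_of_involutive hτ this
      have : τ '' (τ '' connectedComponentIn Yᶜ (τ z)) = connectedComponentIn Yᶜ (τ z) := by
        rw [← image_comp]; simp only [hττ.comp_self]; exact image_id _
      rw [heq] at this
      rwa [this] at hb
    · rw [connectedComponentIn_eq_empty hmem]
      exact isBounded_empty
  · rintro ⟨w, hw, rfl⟩
    show IsBounded (connectedComponentIn (τ '' Y)ᶜ (τ w))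
    by_cases hmem : w ∈ Yᶜ
    · have hb : IsBounded (connectedComponentIn Yᶜ w) := hw
      rw [hcompl]
      rw [← image_connectedComponentIn_involutive hτ hττ Yᶜ w hmem]
      exact image_bounded_of_involutive hτ hb
    · rw [connectedComponentIn_eq_empty]
      · exact isBounded_empty
      · rw [hcompl]
        intro ⟨u, hu, huw⟩
        exact hmem (by rwa [← hττ.injective huw])

open Classical in
lemma continuousOn_piecewise_union {A B : Set ℂ} {f g : ℂ → ℂ}
    (hA : IsClosed A) (hB : IsClosed B) (hAB : A ∩ B = ∅)
    (hf : ContinuousOn f A) (hg : ContinuousOn g B) :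
    ContinuousOn (A.piecewise f g) (A ∪ B) := by
  intro x hx
  rcases hx with hxA | hxB
  · have hxB : x ∉ B := fun h => by
      have : x ∈ A ∩ B := ⟨hxA, h⟩
      rw [hAB] at this; exact this
    have hBc : Bᶜ ∈ 𝓝 x := hB.isOpen_compl.mem_nhds hxB
    rw [← continuousWithinAt_inter hBc]
    apply ContinuousWithinAt.congr ((hf x hxA).mono (by intro y hy; rcases hy.1 with h|h; exact h; exact absurd h hy.2))
    · intro y hy
      have hyA : y ∈ A := by rcases hy.1 with h|h; exact h; exact absurd h hy.2
      simp only [Set.piecewise, hyA, if_pos]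
    · simp only [Set.piecewise, hxA, if_pos]
  · have hxA : x ∉ A := fun h => by
      have : x ∈ A ∩ B := ⟨h, hxB⟩
      rw [hAB] at this; exact this
    have hAc : Aᶜ ∈ 𝓝 x := hA.isOpen_compl.mem_nhds hxA
    rw [← continuousWithinAt_inter hAc]
    apply ContinuousWithinAt.congr ((hg x hxB).mono (by intro y hy; rcases hy.1 with h|h; exact absurd h hy.2; exact h))
    · intro y hy
      have hyA : y ∉ A := hy.2
      simp only [Set.piecewise, hyA, if_neg, if_false]
    · simp only [Set.piecewise, hxA, if_neg, if_false]
lemma no_log_on_sphere {p : ℂ} {R : ℝ} (hR : 0 < R) {g : ℂ → ℂ}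
    (hg : ContinuousOn g (Metric.sphere p R))
    (hexp : ∀ z ∈ Metric.sphere p R, Complex.exp (g z) = z - p) : False := by
  set q : ℝ → ℂ := fun θ => p + R * Complex.exp (θ * Complex.I) with hq_def
  have hq : ∀ θ : ℝ, q θ ∈ Metric.sphere p R := by
    intro θ
    simp only [hq_def, Metric.mem_sphere, dist_eq_norm, add_sub_cancel_left]
    rw [norm_mul, Complex.norm_real, Real.norm_eq_abs,
      Complex.norm_exp_ofReal_mul_I, abs_of_pos hR, mul_one]
  have hqc : Continuous q := by
    apply continuous_const.add
    exact continuous_const.mul (Complex.continuous_exp.comp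
      ((Complex.continuous_ofReal).mul continuous_const))
  have hgqc : Continuous (fun θ : ℝ => g (q θ)) := hg.comp_continuous hqc hq
  set μ : ℝ → ℂ := fun θ => g (q θ) - (Real.log R + θ * Complex.I) with hμ_def
  have hμc : Continuous μ := by
    apply hgqc.sub
    exact continuous_const.add ((Complex.continuous_ofReal).mul continuous_const)
  have hqexp : ∀ θ : ℝ, Complex.exp (g (q θ)) = R * Complex.exp (θ * Complex.I) := by
    intro θ
    rw [hexp _ (hq θ)]
    simp [hq_def]
  have key : ∀ θ : ℝ, ∃ n : ℤ, μ θ = n * (2 * Real.pi * Complex.I) := by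
    intro θ
    rw [← Complex.exp_eq_one_iff]
    rw [hμ_def]
    simp only
    rw [Complex.exp_sub, hqexp θ, Complex.exp_add]
    rw [show Complex.exp ((Real.log R : ℝ) : ℂ) = (R : ℂ) by
      rw [← Complex.ofReal_exp, Real.exp_log hR]]
    rw [div_self]
    apply mul_ne_zero
    · exact_mod_cast ne_of_gt hR
    · exact Complex.exp_ne_zero _
  set ν : ℝ → ℝ := fun θ => (μ θ).im with hν_def
  have hνc : Continuous ν := Complex.continuous_im.comp hμc
  have hν : ∀ θ : ℝ, ∃ n : ℤ, ν θ = n * (2 * Real.pi) := by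
    intro θ
    obtain ⟨n, hn⟩ := key θ
    refine ⟨n, ?_⟩
    rw [hν_def]
    simp only [hn]
    have : ((n : ℂ) * (2 * Real.pi * Complex.I)) = (((n : ℝ) * (2 * Real.pi) : ℝ) : ℂ) * Complex.I := by
      push_cast; ring
    rw [this]
    simp
  have hq2π : q (2 * Real.pi) = q 0 := by
    simp only [hq_def]
    congr 1
    rw [show ((2 * Real.pi : ℝ) : ℂ) * Complex.I = 2 * Real.pi * Complex.I by push_cast; ring]
    rw [Complex.exp_two_pi_mul_I]
    norm_num
  have hν2π : ν (2 * Real.pi) = ν 0 - 2 * Real.pi := by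
    simp only [hν_def, hμ_def, hq2π]
    rw [show ((0:ℝ):ℂ) * Complex.I = 0 by simp]
    have : (g (q 0) - ((Real.log R : ℝ) + ((2 * Real.pi : ℝ) : ℂ) * Complex.I)).im
        = (g (q 0) - ((Real.log R : ℝ) + 0)).im - 2 * Real.pi := by
      simp [Complex.sub_im, Complex.add_im]
    rw [this]
  have hmono : (0:ℝ) ≤ 2 * Real.pi := by positivity
  have hIVT := intermediate_value_Icc' hmono (hνc.continuousOn)
  have hmem : ν 0 - Real.pi ∈ Icc (ν (2 * Real.pi)) (ν 0) := by
    rw [hν2π]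
    constructor <;> nlinarith [Real.pi_pos]
  obtain ⟨θs, _, hθs⟩ := hIVT hmem
  obtain ⟨n0, hn0⟩ := hν 0
  obtain ⟨ns, hns⟩ := hν θs
  rw [hθs, hn0] at hns
  have : (ns : ℝ) * 2 - ((n0 : ℝ) * 2 - 1) = 0 := by
    have hπ := Real.pi_ne_zero
    have : ((ns : ℝ) * 2 - (n0 * 2 - 1)) * Real.pi = 0 := by linarith [hns]
    rcases mul_eq_zero.mp this with h | h
    · linarith [h]
    · exact absurd h hπ
  have hcast : ((ns * 2 : ℤ) : ℝ) = ((n0 * 2 - 1 : ℤ) : ℝ) := by push_cast; linarith [this]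
  have : (ns * 2 : ℤ) = n0 * 2 - 1 := by exact_mod_cast hcast
  omega
lemma log_step {K : Set ℂ} (hK : IsCompact K) {h : ℂ → ℝ → ℂ}
    (hcont : ContinuousOn (fun p : ℂ × ℝ => h p.1 p.2) (K ×ˢ Icc 0 1))
    (hne : ∀ z ∈ K, ∀ t ∈ Icc (0:ℝ) 1, h z t ≠ 0)
    (h0 : ∃ g : ℂ → ℂ, ContinuousOn g K ∧ ∀ z ∈ K, Complex.exp (g z) = h z 0) :
    ∃ g : ℂ → ℂ, ContinuousOn g K ∧ ∀ z ∈ K, Complex.exp (g z) = h z 1 := by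
  rcases K.eq_empty_or_nonempty with rfl | hKne
  · exact ⟨0, continuousOn_empty _, by simp⟩
  have hP : IsCompact (K ×ˢ Icc (0:ℝ) 1) := hK.prod isCompact_Icc
  have hPne : (K ×ˢ Icc (0:ℝ) 1).Nonempty := hKne.prod ⟨0, by norm_num⟩
  have hnormc : ContinuousOn (fun p : ℂ × ℝ => ‖h p.1 p.2‖) (K ×ˢ Icc (0:ℝ) 1) := hcont.norm
  obtain ⟨p₀, hp₀P, hp₀min⟩ := hP.exists_isMinOn hPne hnormc
  set m := ‖h p₀.1 p₀.2‖ with hm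
  have hmpos : 0 < m := norm_pos_iff.mpr (hne _ hp₀P.1 _ hp₀P.2)
  have hmle : ∀ z ∈ K, ∀ t ∈ Icc (0:ℝ) 1, m ≤ ‖h z t‖ := by
    intro z hz t ht
    exact hp₀min (Set.mk_mem_prod hz ht)
  have huc := hP.uniformContinuousOn_of_continuous hcont
  rw [Metric.uniformContinuousOn_iff] at huc
  obtain ⟨δ, hδpos, hδ⟩ := huc m hmpos
  have hslice : ∀ u ∈ Icc (0:ℝ) 1, ContinuousOn (fun w => h w u) K := by
    intro u hu
    have : ContinuousOn ((fun p : ℂ × ℝ => h p.1 p.2) ∘ (fun w => (w, u))) K := by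
      apply hcont.comp ((continuous_id.prodMk continuous_const).continuousOn)
      intro w hw; exact Set.mk_mem_prod hw hu
    exact this
  have step : ∀ t ∈ Icc (0:ℝ) 1, ∀ s ∈ Icc (0:ℝ) 1, dist s t < δ →
      (∃ g, ContinuousOn g K ∧ ∀ z ∈ K, Complex.exp (g z) = h z t) →
      (∃ g, ContinuousOn g K ∧ ∀ z ∈ K, Complex.exp (g z) = h z s) := by
    rintro t ht s hs hst ⟨g, hgc, hgexp⟩
    have hratio : ∀ z ∈ K, h z s / h z t ∈ Metric.ball (1:ℂ) 1 := by
      intro z hz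
      have hd : dist (h z s) (h z t) < m := by
        apply hδ (z, s) (Set.mk_mem_prod hz hs) (z, t) (Set.mk_mem_prod hz ht)
        rw [Prod.dist_eq]
        simp only [dist_self]
        exact max_lt hδpos hst
      have hzt0 : h z t ≠ 0 := hne z hz t ht
      rw [Metric.mem_ball, dist_eq_norm]
      rw [show h z s / h z t - 1 = (h z s - h z t) / h z t by field_simp]
      rw [norm_div, div_lt_one (norm_pos_iff.mpr hzt0)]
      calc ‖h z s - h z t‖ = dist (h z s) (h z t) := (dist_eq_norm _ _).symm
        _ < m := hd
        _ ≤ ‖h z t‖ := hmle z hz t ht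
    have hrne : ∀ z ∈ K, h z s / h z t ≠ 0 := by
      intro z hz h0'
      have := hratio z hz
      rw [h0'] at this
      simp at this
    refine ⟨fun z => g z + Complex.log (h z s / h z t), ?_, ?_⟩
    · apply hgc.add
      intro z hz
      have hrc : ContinuousWithinAt (fun w => h w s / h w t) K z :=
        ((hslice s hs z hz).div (hslice t ht z hz) (hne z hz t ht))
      exact hrc.clog (Complex.ball_one_subset_slitPlane (hratio z hz))
    · intro z hz
      rw [Complex.exp_add, hgexp z hz, Complex.exp_log (hrne z hz)]
      rw [mul_comm]
      exact div_mul_cancel₀ _ (hne z hz t ht)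
  obtain ⟨n, hn⟩ := exists_nat_one_div_lt hδpos
  have hmem : ∀ j : ℕ, j ≤ n + 1 → ((j : ℝ) / (n+1 : ℝ)) ∈ Icc (0:ℝ) 1 := by
    intro j hj
    constructor
    · positivity
    · rw [div_le_one (by positivity)]
      exact_mod_cast hj
  have key : ∀ k : ℕ, k ≤ n + 1 → ∃ g, ContinuousOn g K ∧ ∀ z ∈ K,
      Complex.exp (g z) = h z ((k : ℝ) / (n+1 : ℝ)) := by
    intro k
    induction k with
    | zero => intro _; simpa using h0
    | succ k ih =>
      intro hk
      have hk' : k ≤ n + 1 := Nat.le_of_succ_le hk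
      apply step _ (hmem k hk') _ (hmem (k+1) hk) ?_ (ih hk')
      rw [Real.dist_eq]
      have : ((k:ℝ)+1) / (n+1:ℝ) - (k:ℝ) / (n+1:ℝ) = 1 / (n+1:ℝ) := by
        field_simp
        ring
      push_cast
      rw [this, abs_of_pos (by positivity)]
      exact hn
  obtain ⟨g, hgc, hgexp⟩ := key (n+1) le_rfl
  refine ⟨g, hgc, ?_⟩
  intro z hz
  have h1 : ((n+1 : ℕ) : ℝ) / (n+1 : ℝ) = 1 := by
    push_cast
    field_simp
  rw [← h1]
  exact hgexp z hz
lemma exists_log_of_notMem_hull {Y : Set ℂ} (hY : IsCompact Y) {p : ℂ} (hp : p ∉ hullC Y) :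
    ∃ g : ℂ → ℂ, ContinuousOn g Y ∧ ∀ z ∈ Y, Complex.exp (g z) = z - p := by
  have hpY : p ∈ Yᶜ := fun h => hp (subset_hullC Y h)
  have hDopen : IsOpen (connectedComponentIn Yᶜ p) := hY.isClosed.isOpen_compl.connectedComponentIn
  have hDconn : IsConnected (connectedComponentIn Yᶜ p) :=
    isConnected_connectedComponentIn_iff.mpr hpY
  have hDpath : IsPathConnected (connectedComponentIn Yᶜ p) :=
    (hDopen.isConnected_iff_isPathConnected).mp hDconn
  have hDunb : ¬ IsBounded (connectedComponentIn Yᶜ p) := hp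
  obtain ⟨r, hr⟩ := hY.isBounded.subset_closedBall 0
  have hYnorm : ∀ z ∈ Y, ‖z‖ ≤ max r 0 := by
    intro z hz
    have := hr hz
    rw [Metric.mem_closedBall, dist_zero_right] at this
    exact le_trans this (le_max_left _ _)
  have hbig : ¬ ∀ x ∈ connectedComponentIn Yᶜ p, ‖x‖ ≤ max r 0 + 1 := by
    intro hall
    exact hDunb (isBounded_iff_forall_norm_le.mpr ⟨max r 0 + 1, hall⟩)
  push_neg at hbig
  obtain ⟨w, hwD, hwnorm⟩ := hbig
  have hw0 : w ≠ 0 := by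
    intro h
    rw [h, norm_zero] at hwnorm
    have : (0:ℝ) ≤ max r 0 := le_max_right _ _
    linarith
  have hJ : JoinedIn (connectedComponentIn Yᶜ p) w p :=
    hDpath.joinedIn w hwD p (mem_connectedComponentIn hpY)
  set γ := hJ.somePath with hγ
  have hγmem : ∀ t, γ t ∈ connectedComponentIn Yᶜ p := hJ.somePath_mem
  have hratio : ∀ z ∈ Y, ‖z / w‖ < 1 := by
    intro z hz
    rw [norm_div, div_lt_one (lt_of_le_of_lt (by positivity) hwnorm)]
    have := hYnorm z hz
    linarith
  have hlog := log_step (h := fun z t => z - γ.extend t) hY ?_ ?_ ?_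
  · obtain ⟨g, hgc, hgexp⟩ := hlog
    refine ⟨g, hgc, ?_⟩
    intro z hz
    rw [hgexp z hz, Path.extend_one]
  · exact (continuous_fst.sub (γ.continuous_extend.comp continuous_snd)).continuousOn
  · intro z hz t ht
    rw [sub_ne_zero]
    intro h
    have : γ.extend t ∈ Yᶜ := by
      rw [Path.extend_apply γ ht]
      exact connectedComponentIn_subset _ _ (hγmem _)
    rw [← h] at this
    exact this hz
  · refine ⟨fun z => Complex.log (-w) + Complex.log (1 - z / w), ?_, ?_⟩
    · apply continuousOn_const.add
      intro z hz
      have hc : ContinuousWithinAt (fun z : ℂ => 1 - z / w) Y z :=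
        (continuousWithinAt_const.sub (continuousWithinAt_id.div continuousWithinAt_const hw0))
      apply hc.clog
      apply Complex.ball_one_subset_slitPlane
      rw [Metric.mem_ball, dist_eq_norm]
      have : (1 : ℂ) - z / w - 1 = -(z / w) := by ring
      rw [this, norm_neg]
      exact hratio z hz
    · intro z hz
      have h1 : (1 : ℂ) - z / w ≠ 0 := by
        intro h
        have : ‖(1:ℂ) - z/w - 1‖ < 1 := by
          have : (1 : ℂ) - z / w - 1 = -(z / w) := by ring
          rw [this, norm_neg]; exact hratio z hz
        rw [h] at this
        norm_num at this
      rw [Complex.exp_add, Complex.exp_log (neg_ne_zero.mpr hw0), Complex.exp_log h1]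
      have hw : γ.extend 0 = w := by rw [Path.extend_zero]
      show -w * (1 - z / w) = z - γ.extend 0
      rw [hw]
      have hne1 : w ≠ 0 := hw0
      field_simp
      ring

open Classical in
lemma unbounded_comp_of_log {K : Set ℂ} (hK : IsCompact K) {p : ℂ} (hp : p ∉ K)
    {g : ℂ → ℂ} (hg : ContinuousOn g K) (hexp : ∀ z ∈ K, Complex.exp (g z) = z - p) :
    ¬ IsBounded (connectedComponentIn Kᶜ p) := by
  intro hb
  set C := connectedComponentIn Kᶜ p with hC
  have hCopen : IsOpen C := hK.isClosed.isOpen_compl.connectedComponentIn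
  have hpC : p ∈ C := mem_connectedComponentIn hp
  have hfr : frontier C ⊆ K := by
    have := frontier_connectedComponentIn_subset hK.isClosed.isOpen_compl p
    rwa [compl_compl] at this
  have hf₀c : Continuous ((frontier C).restrict g) := (hg.mono hfr).restrict
  obtain ⟨Φ, hΦ⟩ := ContinuousMap.exists_restrict_eq (Y := ℂ) isClosed_frontier
    ⟨(frontier C).restrict g, hf₀c⟩
  have hΦeq : ∀ x ∈ frontier C, Φ x = g x := by
    intro x hx
    have := DFunLike.congr_fun hΦ ⟨x, hx⟩
    exact this
  set G : ℂ → ℂ := C.piecewise (fun z => Complex.exp (Φ z)) (fun z => z - p) with hG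
  have hGc : Continuous G := by
    apply Continuous.piecewise
    · intro a ha
      rw [hΦeq a ha, hexp a (hfr ha)]
    · exact Complex.continuous_exp.comp Φ.continuous
    · exact continuous_id.sub continuous_const
  have hGne : ∀ z, G z ≠ 0 := by
    intro z
    by_cases hz : z ∈ C
    · rw [hG, Set.piecewise_eq_of_mem _ _ _ hz]
      exact Complex.exp_ne_zero _
    · rw [hG, Set.piecewise_eq_of_notMem _ _ _ hz]
      rw [sub_ne_zero]
      intro h
      rw [h] at hz
      exact hz hpC
  obtain ⟨r, hrC⟩ := hb.subset_closedBall p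
  set R := max r 0 + 1 with hR
  have hRpos : (0:ℝ) < R := by positivity
  have hCR : C ⊆ Metric.ball p R := by
    intro z hz
    have := hrC hz
    rw [Metric.mem_closedBall] at this
    rw [Metric.mem_ball]
    calc dist z p ≤ r := this
      _ ≤ max r 0 := le_max_left _ _
      _ < R := by rw [hR]; linarith
  have hlog := log_step (K := Metric.sphere p R)
    (h := fun w t => G (p + t • (w - p))) (isCompact_sphere p R) ?_ ?_ ?_
  · obtain ⟨g', hg'c, hg'exp⟩ := hlog
    apply no_log_on_sphere hRpos hg'c
    intro z hz
    have hzC : z ∉ C := by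
      intro h
      have := hCR h
      rw [Metric.mem_ball] at this
      rw [Metric.mem_sphere] at hz
      rw [hz] at this
      exact lt_irrefl _ this
    have h2 : G (p + (1:ℝ) • (z - p)) = z - p := by
      rw [one_smul, show p + (z - p) = z by ring, hG,
        Set.piecewise_eq_of_notMem _ _ _ hzC]
    exact (hg'exp z hz).trans h2
  · apply Continuous.continuousOn
    exact hGc.comp (continuous_const.add ((continuous_snd.smul
      (continuous_fst.sub continuous_const))))
  · intro z _ t _
    exact hGne _
  · refine ⟨fun _ => Φ p, continuousOn_const, ?_⟩
    intro z _
    show Complex.exp (Φ p) = G (p + (0:ℝ) • (z - p))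
    rw [zero_smul, add_zero, hG, Set.piecewise_eq_of_mem _ _ _ hpC]
open Classical in
theorem not_fully_invariant_consequences
    (f τ : ℂ → ℂ) (c : ℂ)
    (hf : Continuous f) (hopen : IsOpenMap f)
    (hperfect : ∀ K : Set ℂ, IsCompact K → IsCompact (f ⁻¹' K))
    (hτ : Continuous τ) (hττ : ∀ x, τ (τ x) = x) (hfτ : ∀ x, f (τ x) = f x)
    (hfib : ∀ x y, f x = f y → y = x ∨ y = τ x)
    (hc : τ c = c) (hcuniq : ∀ x, τ x = x → x = c)
    (horiented : ∀ Z : Set ℂ, IsContinuum Z → f '' hullC Z ⊆ hullC (f '' Z))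
    (X : Set ℂ) (hX : IsContinuum X) (hXu : Unshielded X)
    (hfX : f '' X = X) (hnfi : f ⁻¹' X ≠ X)
    (hv : f c ∈ hullC X) :
    f ⁻¹' hullC X ≠ hullC X ∧
    ¬ τ '' X ⊆ hullC X ∧
    (X ∩ τ '' X).Nonempty := by
  have hXc : IsCompact X := hX.1
  have hXcl : IsClosed X := hXc.isClosed
  have hXfr : X = frontier (hullC X) := hXu.trans (frontier_compl _)
  have hTcl : IsClosed (hullC X) := isClosed_hullC hXcl
  have hTb : IsBounded (hullC X) := isBounded_hullC hXc.isBounded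
  have hfT : f '' hullC X ⊆ hullC X := by
    have := horiented X hX
    rwa [hfX] at this
  have hXsubT : X ⊆ hullC X := subset_hullC X
  have hτinv : Function.Involutive τ := hττ
  have hpre : f ⁻¹' X = X ∪ τ '' X := by
    ext z
    constructor
    · intro hz
      have hz' : f z ∈ f '' X := by rw [hfX]; exact hz
      obtain ⟨x, hxX, hfx⟩ := hz'
      rcases hfib x z hfx with h | h
      · left; rw [h]; exact hxX
      · right; exact ⟨x, hxX, h.symm⟩
    · intro hz
      rcases hz with hzX | ⟨x, hxX, rfl⟩
      · show f z ∈ X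
        rw [← hfX]; exact ⟨z, hzX, rfl⟩
      · show f (τ x) ∈ X
        rw [hfτ, ← hfX]; exact ⟨x, hxX, rfl⟩
  obtain ⟨x₀, hx₀X, hτx₀X⟩ : ∃ x ∈ X, τ x ∉ X := by
    by_contra hcon
    push_neg at hcon
    apply hnfi
    rw [hpre]
    apply Subset.antisymm
    · rintro z (hz | ⟨x, hx, rfl⟩)
      · exact hz
      · exact hcon x hx
    · exact subset_union_left
  have part2 : ¬ τ '' X ⊆ hullC X := by
    intro hsub
    have h1 : τ x₀ ∈ hullC X := hsub ⟨x₀, hx₀X, rfl⟩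
    have h2 : τ x₀ ∈ interior (hullC X) := by
      have h3 : τ x₀ ∈ closure (hullC X) := subset_closure h1
      rw [closure_eq_interior_union_frontier] at h3
      rcases h3 with h | h
      · exact h
      · rw [← hXfr] at h; exact absurd h hτx₀X
    have h4 : f '' interior (hullC X) ⊆ interior (hullC X) :=
      interior_maximal ((image_mono (f := f) interior_subset).trans hfT) (hopen _ isOpen_interior)
    have h5 : f (τ x₀) ∈ interior (hullC X) := h4 ⟨_, h2, rfl⟩
    have h6 : f (τ x₀) ∈ X := by
      rw [hfτ, ← hfX]; exact ⟨x₀, hx₀X, rfl⟩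
    rw [hXfr] at h6
    exact h6.2 h5
  refine ⟨?_, part2, ?_⟩
  · intro heq
    apply part2
    rintro z ⟨x, hxX, rfl⟩
    have h1 : f (τ x) ∈ hullC X := by
      rw [hfτ]
      exact hXsubT (by rw [← hfX]; exact ⟨x, hxX, rfl⟩)
    have h2 : τ x ∈ f ⁻¹' hullC X := h1
    rwa [heq] at h2
  -- part 3
  by_contra hne3
  rw [not_nonempty_iff_eq_empty] at hne3
  have hτXc : IsCompact (τ '' X) := hXc.image hτ
  have hτXpre : IsPreconnected (τ '' X) := hX.2.isPreconnected.image τ hτ.continuousOn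
  have hτT : hullC (τ '' X) = τ '' hullC X := image_hullC hτ hτinv X
  have hcX : c ∉ X := by
    intro h
    exact Set.eq_empty_iff_forall_notMem.mp hne3 c ⟨h, ⟨c, h, hc⟩⟩
  have hcτX : c ∉ τ '' X := by
    rintro ⟨x, hx, hxc⟩
    have hxc' : x = c := by rw [← hττ x, hxc, hc]
    rw [hxc'] at hx
    exact hcX hx
  have hτXT : τ '' X ∩ hullC X = ∅ := by
    by_contra hcon
    obtain ⟨y, hyτX, hyT⟩ := nonempty_iff_ne_empty.mpr hcon
    have hyint : y ∈ interior (hullC X) := by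
      have hyX : y ∉ X := fun h => Set.eq_empty_iff_forall_notMem.mp hne3 y ⟨h, hyτX⟩
      have h3 : y ∈ closure (hullC X) := subset_closure hyT
      rw [closure_eq_interior_union_frontier] at h3
      rcases h3 with h | h
      · exact h
      · rw [← hXfr] at h; exact absurd h hyX
    obtain ⟨q, hqτX, hqT⟩ : ∃ q ∈ τ '' X, q ∉ hullC X := by
      by_contra hcon2
      push_neg at hcon2
      exact part2 hcon2
    have hcover : τ '' X ⊆ interior (hullC X) ∪ (hullC X)ᶜ := by
      intro w hw
      by_cases hwT : w ∈ hullC X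
      · left
        have hwX : w ∉ X := fun h => Set.eq_empty_iff_forall_notMem.mp hne3 w ⟨h, hw⟩
        have h3 : w ∈ closure (hullC X) := subset_closure hwT
        rw [closure_eq_interior_union_frontier] at h3
        rcases h3 with h | h
        · exact h
        · rw [← hXfr] at h; exact absurd h hwX
      · right; exact hwT
    obtain ⟨u, _, huint, huc⟩ := hτXpre _ _ isOpen_interior hTcl.isOpen_compl hcover
      ⟨y, hyτX, hyint⟩ ⟨q, hqτX, hqT⟩
    exact huc (interior_subset huint)
  have hXτT : X ∩ τ '' hullC X = ∅ := by
    rw [Set.eq_empty_iff_forall_notMem]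
    rintro x ⟨hxX, t, htT, htx⟩
    have hmem : τ x ∈ τ '' X ∩ hullC X := by
      refine ⟨⟨x, hxX, rfl⟩, ?_⟩
      rw [← htx, hττ]
      exact htT
    rw [hτXT] at hmem
    exact hmem
  have hTcomp : IsCompact (hullC X) := Metric.isCompact_of_isClosed_isBounded hTcl hTb
  have hτTcl : IsClosed (τ '' hullC X) := (hTcomp.image hτ).isClosed
  have hfrτT : frontier (τ '' hullC X) ⊆ τ '' X := by
    rw [← hτT]
    exact frontier_hullC_subset hτXc.isClosed
  have hTτT : hullC X ∩ τ '' hullC X = ∅ := by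
    have hScl : IsClosed (hullC X ∩ τ '' hullC X) := hTcl.inter hτTcl
    have hfrS : frontier (hullC X ∩ τ '' hullC X) = ∅ := by
      rw [Set.eq_empty_iff_forall_notMem]
      intro z hz
      have h1 : z ∈ hullC X ∩ τ '' hullC X := by
        rw [← hScl.closure_eq]
        exact frontier_subset_closure hz
      rcases frontier_inter_subset (hullC X) (τ '' hullC X) hz with ⟨h2f, _⟩ | ⟨_, h2f⟩
      · rw [← hXfr] at h2f
        exact Set.eq_empty_iff_forall_notMem.mp hXτT z ⟨h2f, h1.2⟩
      · exact Set.eq_empty_iff_forall_notMem.mp hτXT z ⟨hfrτT h2f, h1.1⟩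
    rcases frontier_eq_empty_iff.mp hfrS with h | h
    · exact h
    · exfalso
      have hb : IsBounded {z : ℂ | (0:ℝ) < ‖z‖} := by
        apply IsBounded.subset (IsBounded.subset hTb inter_subset_left)
        rw [h]
        exact subset_univ _
      exact unbounded_norm_gt 0 hb
  have hcT : c ∉ hullC X := by
    intro h
    have hmem : c ∈ hullC X ∩ τ '' hullC X := ⟨h, ⟨c, h, hc⟩⟩
    rw [hTτT] at hmem
    exact hmem
  have hcτT : c ∉ hullC (τ '' X) := by
    rw [hτT]
    rintro ⟨t, htT, htc⟩
    have htc' : t = c := by rw [← hττ t, htc, hc]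
    rw [htc'] at htT
    exact hcT htT
  obtain ⟨g₁, hg₁c, hg₁e⟩ := exists_log_of_notMem_hull hXc hcT
  obtain ⟨g₂, hg₂c, hg₂e⟩ := exists_log_of_notMem_hull hτXc hcτT
  have hKc : IsCompact (X ∪ τ '' X) := hXc.union hτXc
  have hφc : ContinuousOn (X.piecewise g₁ g₂) (X ∪ τ '' X) :=
    continuousOn_piecewise_union hXcl hτXc.isClosed hne3 hg₁c hg₂c
  have hφe : ∀ z ∈ X ∪ τ '' X, Complex.exp (X.piecewise g₁ g₂ z) = z - c := by
    intro z hz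
    rcases hz with hzX | hzτX
    · rw [Set.piecewise_eq_of_mem _ _ _ hzX]
      exact hg₁e z hzX
    · have hzX : z ∉ X := fun h => Set.eq_empty_iff_forall_notMem.mp hne3 z ⟨h, hzτX⟩
      rw [Set.piecewise_eq_of_notMem _ _ _ hzX]
      exact hg₂e z hzτX
  have hcK : c ∉ X ∪ τ '' X := by
    rintro (h | h)
    · exact hcX h
    · exact hcτX h
  have hGunb : ¬ IsBounded (connectedComponentIn (X ∪ τ '' X)ᶜ c) :=
    unbounded_comp_of_log hKc hcK hφc hφe
  apply hGunb
  have himg : f '' connectedComponentIn (X ∪ τ '' X)ᶜ c ⊆ Xᶜ := by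
    rintro _ ⟨z, hzG, rfl⟩
    have hzK : z ∈ (X ∪ τ '' X)ᶜ := connectedComponentIn_subset _ _ hzG
    intro hfz
    apply hzK
    rw [← hpre]
    exact hfz
  have hvG : f c ∈ f '' connectedComponentIn (X ∪ τ '' X)ᶜ c :=
    ⟨c, mem_connectedComponentIn hcK, rfl⟩
  have hsub2 : f '' connectedComponentIn (X ∪ τ '' X)ᶜ c ⊆ connectedComponentIn Xᶜ (f c) :=
    (isPreconnected_connectedComponentIn.image f hf.continuousOn).subset_connectedComponentIn
      hvG himg
  have hbd : IsBounded (f '' connectedComponentIn (X ∪ τ '' X)ᶜ c) :=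
    IsBounded.subset hv hsub2
  obtain ⟨r, hr⟩ := hbd.subset_closedBall 0
  have hcomp : IsCompact (f ⁻¹' Metric.closedBall 0 r) := hperfect _ (isCompact_closedBall _ _)
  apply hcomp.isBounded.subset
  intro z hzG
  exact hr ⟨z, hzG, rfl⟩
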